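/- Let K be a field with char K ≠ 2 and V a finite-dimensional ℤ₂-graded vector space over K, with grading subspaces V₀, V₁ (V = V₀ ⊕ V₁ internal direct sum). Equip V* with the dual grading (V*)₀ := V₁^⊥ and (V*)₁ := V₀^⊥ (these form an internal direct sum of V*). Let R_S ⊆ V ⊗ V be the span of the elements v ⊗ w − (−1)^{ij} w ⊗ v for v ∈ V_i, w ∈ V_j (i,j ∈ {0,1}), and let R_Λ ⊆ V* ⊗ V* be the span of λ ⊗ μ + (−1)^{ij} μ ⊗ λ for λ ∈ (V*)_i, μ ∈ (V*)_j. Then the preimage under the canonical isomorphism dualDistrib : V* ⊗ V* ≅ (V ⊗ V)* of the dual annihilator of R_S equals R_Λ. -/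

import Mathlib

open TensorProduct

set_option maxHeartbeats 1600000

/-- Auxiliary: the "super swap" associated with a projection `p`. -/
noncomputable def superSwapAux (K M : Type*) [CommRing K] [AddCommGroup M] [Module K M]
    (p : M →ₗ[K] M) : M ⊗[K] M →ₗ[K] M ⊗[K] M :=
  (TensorProduct.comm K M M).toLinearMap ∘ₗ
    (LinearMap.id - (2 : K) • TensorProduct.map p p)

theorem superSwapAux_tmul (K M : Type*) [CommRing K] [AddCommGroup M] [Module K M]
    (p : M →ₗ[K] M) (v w : M) :
    superSwapAux K M p (v ⊗ₜ[K] w) = w ⊗ₜ[K] v - (2 : K) • (p w ⊗ₜ[K] p v) := by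
  rw [superSwapAux]
  simp only [LinearMap.comp_apply, LinearMap.coe_comp, Function.comp_apply,
    LinearEquiv.coe_coe, LinearMap.sub_apply, LinearMap.id_apply, LinearMap.smul_apply,
    TensorProduct.map_tmul, map_sub, map_smul, TensorProduct.comm_tmul]

/-- the Koszul dual of the super-symmetric relations is the
super-exterior relations: the preimage under `dualDistrib` of the dual annihilator of
`R_S = span{v ⊗ w - (-1)^{ij} w ⊗ v}` equals `R_Λ = span{λ ⊗ μ + (-1)^{ij} μ ⊗ λ}`,
where `V*` carries the dual grading `(V*)₀ = V₁^⊥`, `(V*)₁ = V₀^⊥`. -/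
theorem symmetric_relations_koszul_dual_exterior {K V : Type*} [Field K]
    (hchar : (2 : K) ≠ 0)
    [AddCommGroup V] [Module K V] [FiniteDimensional K V]
    (Vg : ZMod 2 → Submodule K V) (hV : DirectSum.IsInternal Vg) :
    Submodule.comap (TensorProduct.dualDistrib K V V)
        (Submodule.dualAnnihilator
          (Submodule.span K
            {x : V ⊗[K] V | ∃ (i j : ZMod 2) (v w : V), v ∈ Vg i ∧ w ∈ Vg j ∧
              x = v ⊗ₜ[K] w - ((-1 : K) ^ (i * j).val) • (w ⊗ₜ[K] v)}))
      = Submodule.span K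
          {y : Module.Dual K V ⊗[K] Module.Dual K V |
            ∃ (i j : ZMod 2) (l m : Module.Dual K V),
              l ∈ (Vg (i + 1)).dualAnnihilator ∧ m ∈ (Vg (j + 1)).dualAnnihilator ∧
              y = l ⊗ₜ[K] m + ((-1 : K) ^ (i * j).val) • (m ⊗ₜ[K] l)} := by
  classical
  -- dichotomy for `ZMod 2`
  have hdich : ∀ a : ZMod 2, a = 0 ∨ a = 1 := by decide
  have hne : ∀ a b : ZMod 2, a ≠ b → b = a + 1 := by decide
  have e01 : (0 : ZMod 2) + 1 = 1 := by decide
  have e10 : (1 : ZMod 2) + 1 = 0 := by decide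
  -- the projection `p` onto `Vg 1` along `Vg 0`
  have hcompl : IsCompl (Vg 0) (Vg 1) :=
    hV.isCompl (by decide) (by ext x; simp; revert x; decide)
  set p : V →ₗ[K] V :=
    (Vg 1).subtype ∘ₗ (Vg 1).projectionOnto (Vg 0) hcompl.symm with hp
  have hpmem : ∀ v, p v ∈ Vg 1 := fun v => ((Vg 1).projectionOnto (Vg 0) hcompl.symm v).2
  have hp1 : ∀ v ∈ Vg 1, p v = v := by
    intro v hv
    have := Submodule.projectionOnto_apply_left hcompl.symm ⟨v, hv⟩
    simp [hp, this]
  have hp0 : ∀ v ∈ Vg 0, p v = 0 := by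
    intro v hv
    have := Submodule.projectionOnto_apply_of_mem_right hcompl.symm hv
    simp [hp, this]
  have hker : ∀ v, v - p v ∈ Vg 0 := by
    intro v
    have hv : v ∈ Vg 0 ⊔ Vg 1 := by
      rw [hcompl.sup_eq_top]; trivial
    obtain ⟨a, ha, b, hb, rfl⟩ := Submodule.mem_sup.mp hv
    have : p (a + b) = b := by
      rw [map_add, hp0 a ha, hp1 b hb, zero_add]
    rw [this]; simpa using ha
  -- the dual projection `q` onto `(Vg 0).dualAnnihilator` along `(Vg 1).dualAnnihilator`
  set q : Module.Dual K V →ₗ[K] Module.Dual K V := p.dualMap with hqdef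
  have hq_apply : ∀ (l : Module.Dual K V) (v : V), q l v = l (p v) := fun l v => rfl
  have hq0 : ∀ l ∈ (Vg 1).dualAnnihilator, q l = 0 := by
    intro l hl
    ext v
    simpa [hq_apply] using (Submodule.mem_dualAnnihilator _).mp hl (p v) (hpmem v)
  have hq1 : ∀ l ∈ (Vg 0).dualAnnihilator, q l = l := by
    intro l hl
    ext v
    have h0 := (Submodule.mem_dualAnnihilator _).mp hl (v - p v) (hker v)
    rw [map_sub] at h0
    have h1 : l (p v) = l v := by
      have := sub_eq_zero.mp h0
      exact this.symm
    simpa [hq_apply] using h1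
  have hqmem : ∀ l, q l ∈ (Vg 0).dualAnnihilator := by
    intro l
    rw [Submodule.mem_dualAnnihilator]
    intro v hv
    simp [hq_apply, hp0 v hv]
  have hqker : ∀ l, l - q l ∈ (Vg 1).dualAnnihilator := by
    intro l
    rw [Submodule.mem_dualAnnihilator]
    intro v hv
    simp [hq_apply, hp1 v hv]
  -- the super-swaps
  set S : V ⊗[K] V →ₗ[K] V ⊗[K] V := superSwapAux K V p with hSdef
  set T : Module.Dual K V ⊗[K] Module.Dual K V →ₗ[K] Module.Dual K V ⊗[K] Module.Dual K V :=
    superSwapAux K (Module.Dual K V) q with hTdef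
  have hS : ∀ v w : V, S (v ⊗ₜ[K] w) = w ⊗ₜ[K] v - (2 : K) • (p w ⊗ₜ[K] p v) :=
    fun v w => superSwapAux_tmul K V p v w
  have hT : ∀ l m : Module.Dual K V,
      T (l ⊗ₜ[K] m) = m ⊗ₜ[K] l - (2 : K) • (q m ⊗ₜ[K] q l) :=
    fun l m => superSwapAux_tmul K (Module.Dual K V) q l m
  set D := TensorProduct.dualDistrib K V V with hDdef
  set RS := Submodule.span K
            {x : V ⊗[K] V | ∃ (i j : ZMod 2) (v w : V), v ∈ Vg i ∧ w ∈ Vg j ∧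
              x = v ⊗ₜ[K] w - ((-1 : K) ^ (i * j).val) • (w ⊗ₜ[K] v)} with hRS
  set RL := Submodule.span K
          {y : Module.Dual K V ⊗[K] Module.Dual K V |
            ∃ (i j : ZMod 2) (l m : Module.Dual K V),
              l ∈ (Vg (i + 1)).dualAnnihilator ∧ m ∈ (Vg (j + 1)).dualAnnihilator ∧
              y = l ⊗ₜ[K] m + ((-1 : K) ^ (i * j).val) • (m ⊗ₜ[K] l)} with hRL
  -- vanishing of graded functionals on wrong components
  have hvan : ∀ (a b : ZMod 2) (f : Module.Dual K V) (u : V),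
      f ∈ (Vg (a + 1)).dualAnnihilator → u ∈ Vg b → a ≠ b → f u = 0 := by
    intro a b f u hf hu hab
    have hb : b = a + 1 := hne a b hab
    exact (Submodule.mem_dualAnnihilator _).mp hf u (by rwa [hb] at hu)
  have hsq : ∀ n : ℕ, ((-1 : K) ^ n) * ((-1 : K) ^ n) = 1 := by
    intro n
    rw [← pow_add]
    exact Even.neg_one_pow ⟨n, rfl⟩
  -- spanning of graded pure tensors
  have hspanV : (⊤ : Submodule K (V ⊗[K] V)) ≤ Submodule.span K
      {x : V ⊗[K] V | ∃ (i j : ZMod 2) (v w : V), v ∈ Vg i ∧ w ∈ Vg j ∧ x = v ⊗ₜ[K] w} := by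
    rw [← TensorProduct.span_tmul_eq_top K V V]
    rw [Submodule.span_le]
    rintro x ⟨v, w, rfl⟩
    have hvw : v ⊗ₜ[K] w = (v - p v) ⊗ₜ[K] (w - p w) + (v - p v) ⊗ₜ[K] (p w)
        + (p v) ⊗ₜ[K] (w - p w) + (p v) ⊗ₜ[K] (p w) := by
      simp only [TensorProduct.tmul_sub, TensorProduct.sub_tmul]
      abel
    rw [hvw]
    refine add_mem (add_mem (add_mem ?_ ?_) ?_) ?_
    · exact Submodule.subset_span ⟨0, 0, _, _, hker v, hker w, rfl⟩
    · exact Submodule.subset_span ⟨0, 1, _, _, hker v, hpmem w, rfl⟩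
    · exact Submodule.subset_span ⟨1, 0, _, _, hpmem v, hker w, rfl⟩
    · exact Submodule.subset_span ⟨1, 1, _, _, hpmem v, hpmem w, rfl⟩
  have hspanD : (⊤ : Submodule K (Module.Dual K V ⊗[K] Module.Dual K V)) ≤ Submodule.span K
      {y : Module.Dual K V ⊗[K] Module.Dual K V |
        ∃ (i j : ZMod 2) (l m : Module.Dual K V),
          l ∈ (Vg (i + 1)).dualAnnihilator ∧ m ∈ (Vg (j + 1)).dualAnnihilator ∧
          y = l ⊗ₜ[K] m} := by
    rw [← TensorProduct.span_tmul_eq_top K (Module.Dual K V) (Module.Dual K V)]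
    rw [Submodule.span_le]
    rintro x ⟨l, m, rfl⟩
    have hlm : l ⊗ₜ[K] m = (l - q l) ⊗ₜ[K] (m - q m) + (l - q l) ⊗ₜ[K] (q m)
        + (q l) ⊗ₜ[K] (m - q m) + (q l) ⊗ₜ[K] (q m) := by
      simp only [TensorProduct.tmul_sub, TensorProduct.sub_tmul]
      abel
    rw [hlm]
    refine add_mem (add_mem (add_mem ?_ ?_) ?_) ?_
    · exact Submodule.subset_span ⟨0, 0, _, _, by rw [e01]; exact hqker l,
        by rw [e01]; exact hqker m, rfl⟩
    · exact Submodule.subset_span ⟨0, 1, _, _, by rw [e01]; exact hqker l,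
        by rw [e10]; exact hqmem m, rfl⟩
    · exact Submodule.subset_span ⟨1, 0, _, _, by rw [e10]; exact hqmem l,
        by rw [e01]; exact hqker m, rfl⟩
    · exact Submodule.subset_span ⟨1, 1, _, _, by rw [e10]; exact hqmem l,
        by rw [e10]; exact hqmem m, rfl⟩
  -- `(1 - S)` lands in `RS`
  have h1S : ∀ x : V ⊗[K] V, x - S x ∈ RS := by
    intro x
    have hx : x ∈ Submodule.span K
        {x : V ⊗[K] V | ∃ (i j : ZMod 2) (v w : V), v ∈ Vg i ∧ w ∈ Vg j ∧ x = v ⊗ₜ[K] w} :=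
      hspanV trivial
    have hmap : Submodule.span K
        {x : V ⊗[K] V | ∃ (i j : ZMod 2) (v w : V), v ∈ Vg i ∧ w ∈ Vg j ∧ x = v ⊗ₜ[K] w}
        ≤ RS.comap (LinearMap.id - S) := by
      rw [Submodule.span_le]
      rintro _ ⟨i, j, v, w, hv, hw, rfl⟩
      simp only [Submodule.mem_comap, LinearMap.sub_apply, LinearMap.id_apply, SetLike.mem_coe]
      rw [hS v w]
      refine Submodule.subset_span ⟨i, j, v, w, hv, hw, ?_⟩
      rcases hdich i with hi | hi <;> rcases hdich j with hj | hj <;> subst hi <;> subst hj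
      · rw [hp0 v hv]
        have hval : ((0 : ZMod 2) * 0).val = 0 := by decide
        rw [hval, pow_zero, one_smul]
        rw [TensorProduct.tmul_zero, smul_zero, sub_zero]
      · rw [hp0 v hv]
        have hval : ((0 : ZMod 2) * 1).val = 0 := by decide
        rw [hval, pow_zero, one_smul]
        rw [TensorProduct.tmul_zero, smul_zero, sub_zero]
      · rw [hp0 w hw]
        have hval : ((1 : ZMod 2) * 0).val = 0 := by decide
        rw [hval, pow_zero, one_smul]
        rw [TensorProduct.zero_tmul, smul_zero, sub_zero]
      · rw [hp1 v hv, hp1 w hw]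
        have hval : ((1 : ZMod 2) * 1).val = 1 := by decide
        rw [hval, pow_one, neg_one_smul, two_smul]
        abel
    simpa using hmap hx
  -- `(1 + T)` lands in `RL`
  have h1T : ∀ y : Module.Dual K V ⊗[K] Module.Dual K V, y + T y ∈ RL := by
    intro y
    have hy : y ∈ Submodule.span K
        {y : Module.Dual K V ⊗[K] Module.Dual K V |
          ∃ (i j : ZMod 2) (l m : Module.Dual K V),
            l ∈ (Vg (i + 1)).dualAnnihilator ∧ m ∈ (Vg (j + 1)).dualAnnihilator ∧
            y = l ⊗ₜ[K] m} := hspanD trivial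
    have hmap : Submodule.span K
        {y : Module.Dual K V ⊗[K] Module.Dual K V |
          ∃ (i j : ZMod 2) (l m : Module.Dual K V),
            l ∈ (Vg (i + 1)).dualAnnihilator ∧ m ∈ (Vg (j + 1)).dualAnnihilator ∧
            y = l ⊗ₜ[K] m}
        ≤ RL.comap (LinearMap.id + T) := by
      rw [Submodule.span_le]
      rintro _ ⟨i, j, l, m, hl, hm, rfl⟩
      simp only [Submodule.mem_comap, LinearMap.add_apply, LinearMap.id_apply, SetLike.mem_coe]
      rw [hT l m]
      refine Submodule.subset_span ⟨i, j, l, m, hl, hm, ?_⟩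
      rcases hdich i with hi | hi <;> rcases hdich j with hj | hj <;> subst hi <;> subst hj
      · rw [e01] at hl
        rw [hq0 l hl]
        have hval : ((0 : ZMod 2) * 0).val = 0 := by decide
        rw [hval, pow_zero, one_smul]
        rw [TensorProduct.tmul_zero, smul_zero]
        abel
      · rw [e01] at hl
        rw [hq0 l hl]
        have hval : ((0 : ZMod 2) * 1).val = 0 := by decide
        rw [hval, pow_zero, one_smul]
        rw [TensorProduct.tmul_zero, smul_zero]
        abel
      · rw [e01] at hm
        rw [hq0 m hm]
        have hval : ((1 : ZMod 2) * 0).val = 0 := by decide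
        rw [hval, pow_zero, one_smul]
        rw [TensorProduct.zero_tmul, smul_zero]
        abel
      · rw [e10] at hl hm
        rw [hq1 l hl, hq1 m hm]
        have hval : ((1 : ZMod 2) * 1).val = 1 := by decide
        rw [hval, pow_one]
        module
    simpa using hmap hy
  -- intertwining: `D ∘ T = (precomposition with S) ∘ D`
  have hDT : ∀ η, D (T η) = (D η).comp S := by
    have key : D ∘ₗ T = (LinearMap.lcomp K K S) ∘ₗ D := by
      apply TensorProduct.ext'
      intro l m
      apply TensorProduct.ext'
      intro v w
      simp only [LinearMap.comp_apply, LinearMap.coe_comp, Function.comp_apply,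
        LinearMap.lcomp_apply]
      rw [hT l m, hS v w]
      rw [hDdef]
      simp only [map_sub, map_smul, TensorProduct.dualDistrib_apply,
        LinearMap.sub_apply, LinearMap.smul_apply, smul_eq_mul, map_smul]
      simp only [hq_apply]
      ring
    intro η
    exact LinearMap.congr_fun key η
  -- injectivity of dualDistrib
  have hinj : Function.Injective D := by
    let b := Module.Free.chooseBasis K V
    have h := TensorProduct.dualDistrib_dualDistribInvOfBasis_right_inverse (R := K) b b
    intro x y hxy
    calc x = TensorProduct.dualDistribInvOfBasis b b (D x) := (LinearMap.congr_fun h x).symm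
    _ = TensorProduct.dualDistribInvOfBasis b b (D y) := by rw [hxy]
    _ = y := LinearMap.congr_fun h y
  apply le_antisymm
  · -- hard direction
    intro ξ hξ
    have hann : ∀ x ∈ RS, D ξ x = 0 :=
      fun x hx => (Submodule.mem_dualAnnihilator _).mp (Submodule.mem_comap.mp hξ) x hx
    have hfixD : D (T ξ) = D ξ := by
      rw [hDT ξ]
      apply LinearMap.ext
      intro x
      have h0 := hann (x - S x) (h1S x)
      rw [map_sub] at h0
      have := sub_eq_zero.mp h0
      simpa [LinearMap.comp_apply] using this.symm
    have hfix : T ξ = ξ := hinj hfixD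
    have hrepr : ξ = (2 : K)⁻¹ • (ξ + T ξ) := by
      rw [hfix, ← two_smul K ξ, smul_smul, inv_mul_cancel₀ hchar, one_smul]
    rw [hrepr]
    exact Submodule.smul_mem _ _ (h1T ξ)
  · -- easy direction
    rw [Submodule.span_le]
    rintro _ ⟨i, j, l, m, hl, hm, rfl⟩
    simp only [SetLike.mem_coe, Submodule.mem_comap]
    rw [Submodule.mem_dualAnnihilator]
    intro x hx
    have hk : RS ≤ LinearMap.ker (D (l ⊗ₜ[K] m + ((-1 : K) ^ (i * j).val) • (m ⊗ₜ[K] l))) := by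
      rw [hRS, Submodule.span_le]
      rintro _ ⟨k, n, v, w, hv, hw, rfl⟩
      simp only [SetLike.mem_coe, LinearMap.mem_ker]
      rw [hDdef]
      simp only [map_add, map_smul, map_sub, TensorProduct.dualDistrib_apply,
        LinearMap.add_apply, LinearMap.smul_apply, LinearMap.sub_apply, smul_eq_mul]
      have key1 : l v * m w = 0 ∨
          ((-1 : K) ^ (i * j).val * ((-1 : K) ^ (k * n).val) = 1) := by
        by_cases hki : i = k
        · by_cases hnj : j = n
          · right; subst hki; subst hnj; exact hsq _
          · left; rw [hvan j n m w hm hw hnj]; ring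
        · left; rw [hvan i k l v hl hv hki]; ring
      have key2 : m v * l w = 0 ∨
          ((-1 : K) ^ (i * j).val = (-1 : K) ^ (k * n).val) := by
        by_cases hkj : j = k
        · by_cases hni : i = n
          · right; subst hkj; subst hni; rw [mul_comm]
          · left; rw [hvan i n l w hl hw hni]; ring
        · left; rw [hvan j k m v hm hv hkj]; ring
      set e : K := (-1 : K) ^ (i * j).val
      set e' : K := (-1 : K) ^ (k * n).val
      rcases key1 with h1 | h1 <;> rcases key2 with h2 | h2
      · linear_combination (1 - e * e') * h1 + (e - e') * h2
      · linear_combination (1 - e * e') * h1 + (m v * l w) * h2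
      · linear_combination (-(l v * m w)) * h1 + (e - e') * h2
      · linear_combination (-(l v * m w)) * h1 + (m v * l w) * h2
    exact hk hx
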